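/- (Bauer–Fike) Let A ∈ ℂ^{n×n} be diagonalizable, A = U·D·U⁻¹ with D diagonal and U invertible, and let E ∈ ℂ^{n×n}. Then for every eigenvalue μ of A + E there exists an eigenvalue λ of A (i.e., a diagonal entry of D) such that |μ − λ| ≤ ‖U‖₂·‖U⁻¹‖₂·‖E‖₂. -/

import Mathlib

/-- The spectral norm on `ℂ^{n×n}`: the operator norm induced by the Euclidean vector norm. -/
noncomputable def specNorm {n : ℕ} (M : Matrix (Fin n) (Fin n) ℂ) : ℝ :=
  ‖LinearMap.toContinuousLinearMap (Matrix.toEuclideanLin M)‖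

/-- `μ` is an eigenvalue of a complex square matrix `M` iff `M − μ·I` is not invertible. -/
def IsEigenvalue {n : ℕ} (M : Matrix (Fin n) (Fin n) ℂ) (μ : ℂ) : Prop :=
  ¬ IsUnit (M - μ • (1 : Matrix (Fin n) (Fin n) ℂ))

open scoped Matrix.Norms.L2Operator

lemma specNorm_eq_norm {n : ℕ} (M : Matrix (Fin n) (Fin n) ℂ) : specNorm M = ‖M‖ := rfl

lemma specNorm_nonneg {n : ℕ} (M : Matrix (Fin n) (Fin n) ℂ) : 0 ≤ specNorm M := by
  rw [specNorm_eq_norm]; exact norm_nonneg _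

lemma diag_norm_le {n : ℕ} (v : Fin n → ℂ) (r : ℝ) (hr : 0 ≤ r) (h : ∀ i, ‖v i‖ ≤ r) :
    ‖(Matrix.diagonal v : Matrix (Fin n) (Fin n) ℂ)‖ ≤ r := by
  rw [Matrix.l2_opNorm_def]
  apply ContinuousLinearMap.opNorm_le_bound _ hr
  intro x
  have hx : ∀ i, (Matrix.toEuclideanLin (Matrix.diagonal v) x) i = v i * x i := by
    intro i
    simp [Matrix.toEuclideanLin_apply, Matrix.mulVec_diagonal]
  simp only [LinearEquiv.trans_apply, LinearMap.coe_toContinuousLinearMap']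
  rw [EuclideanSpace.norm_eq, EuclideanSpace.norm_eq]
  rw [show r * Real.sqrt (∑ i, ‖x i‖ ^ 2) = Real.sqrt (r ^ 2 * ∑ i, ‖x i‖ ^ 2) by
    rw [Real.sqrt_mul (sq_nonneg r), Real.sqrt_sq hr]]
  apply Real.sqrt_le_sqrt
  rw [Finset.mul_sum]
  apply Finset.sum_le_sum
  intro i _
  rw [hx i, norm_mul, mul_pow]
  have := h i
  gcongr

set_option maxHeartbeats 1000000 in
/-- **Bauer–Fike theorem**: if `A = U·D·U⁻¹` is diagonalizable and `μ` is an eigenvalue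
of `A + E`, then some diagonal entry `d i` of `D` satisfies
`|μ − d i| ≤ ‖U‖₂·‖U⁻¹‖₂·‖E‖₂`. -/
theorem bauer_fike {n : ℕ} (U : Matrix (Fin n) (Fin n) ℂ) (hU : IsUnit U)
    (d : Fin n → ℂ) (A E : Matrix (Fin n) (Fin n) ℂ)
    (hA : A = U * Matrix.diagonal d * U⁻¹)
    (μ : ℂ) (hμ : IsEigenvalue (A + E) μ) :
    ∃ i : Fin n, ‖μ - d i‖ ≤ specNorm U * specNorm U⁻¹ * specNorm E := by
  -- trivial case: n = 0
  rcases Nat.eq_zero_or_pos n with hn | hn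
  · subst hn
    exact absurd (by
      rw [Subsingleton.elim (A + E - μ • 1) (1 : Matrix (Fin 0) (Fin 0) ℂ)]
      exact isUnit_one) hμ
  -- trivial case: μ is itself an eigenvalue of A
  by_cases hex : ∃ i, d i = μ
  · obtain ⟨i, hi⟩ := hex
    refine ⟨i, ?_⟩
    rw [hi, sub_self, norm_zero]
    have h1 := specNorm_nonneg U
    have h2 := specNorm_nonneg U⁻¹
    have h3 := specNorm_nonneg E
    positivity
  push_neg at hex
  have hne : ∀ i, d i - μ ≠ 0 := fun i => sub_ne_zero.mpr (hex i)
  have hUdet : IsUnit U.det := (Matrix.isUnit_iff_isUnit_det U).mp hU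
  have hUU' : U * U⁻¹ = 1 := Matrix.mul_nonsing_inv U hUdet
  have hU'U : U⁻¹ * U = 1 := Matrix.nonsing_inv_mul U hUdet
  set Dμ : Matrix (Fin n) (Fin n) ℂ := Matrix.diagonal (fun i => d i - μ) with hDμ
  set Dw : Matrix (Fin n) (Fin n) ℂ := Matrix.diagonal (fun i => (d i - μ)⁻¹) with hDw
  have hDD : Dμ * Dw = 1 := by
    rw [hDμ, hDw, Matrix.diagonal_mul_diagonal]
    rw [show (fun i => (d i - μ) * (d i - μ)⁻¹) = fun _ => (1 : ℂ) from
      funext fun i => mul_inv_cancel₀ (hne i)]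
    exact Matrix.diagonal_one
  have hDD' : Dw * Dμ = 1 := by
    rw [hDμ, hDw, Matrix.diagonal_mul_diagonal]
    rw [show (fun i => (d i - μ)⁻¹ * (d i - μ)) = fun _ => (1 : ℂ) from
      funext fun i => inv_mul_cancel₀ (hne i)]
    exact Matrix.diagonal_one
  set B : Matrix (Fin n) (Fin n) ℂ := Dw * U⁻¹ * E * U with hB
  -- the key factorization
  have hfact : A + E - μ • 1 = U * Dμ * (1 + B) * U⁻¹ := by
    have hDμ_eq : Dμ = Matrix.diagonal d - μ • 1 := by
      rw [hDμ, Matrix.smul_one_eq_diagonal, ← Matrix.diagonal_sub]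
    have h1 : U * Dμ * U⁻¹ = A - μ • 1 := by
      rw [hDμ_eq, Matrix.mul_sub, Matrix.sub_mul, hA, Matrix.mul_smul, mul_one,
        Matrix.smul_mul, hUU']
    have h2 : U * Dμ * B * U⁻¹ = E := by
      rw [hB]
      simp only [← Matrix.mul_assoc]
      rw [Matrix.mul_assoc U Dμ Dw, hDD, mul_one, Matrix.mul_assoc (U * U⁻¹ * E) U U⁻¹,
        hUU', one_mul, mul_one]
    rw [Matrix.mul_add, Matrix.add_mul, mul_one, h1, h2]
    abel
  -- 1 + B is not a unit
  have hnotunit : ¬ IsUnit (1 + B) := by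
    intro h
    apply hμ
    rw [hfact]
    have hUinv : IsUnit (U⁻¹ : Matrix (Fin n) (Fin n) ℂ) := ⟨⟨U⁻¹, U, hU'U, hUU'⟩, rfl⟩
    have hDμU : IsUnit Dμ := ⟨⟨Dμ, Dw, hDD, hDD'⟩, rfl⟩
    exact ((hU.mul hDμU).mul h).mul hUinv
  -- hence ‖B‖ ≥ 1
  have hBnorm : (1 : ℝ) ≤ ‖B‖ := by
    by_contra h
    push_neg at h
    apply hnotunit
    have : ‖-B‖ < 1 := by rwa [norm_neg]
    have h2 : IsUnit (1 - -B) := (Units.oneSub (-B) this).isUnit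
    rwa [sub_neg_eq_add] at h2
  -- find the index maximizing ‖(d i - μ)⁻¹‖
  obtain ⟨i₀, -, hmax⟩ := Finset.exists_max_image Finset.univ (fun i => ‖(d i - μ)⁻¹‖)
    (Finset.univ_nonempty_iff.mpr ⟨⟨0, hn⟩⟩)
  have hDwnorm : ‖Dw‖ ≤ ‖(d i₀ - μ)⁻¹‖ :=
    diag_norm_le _ _ (norm_nonneg _) (fun i => hmax i (Finset.mem_univ i))
  -- chain of norm inequalities
  have hchain : ‖B‖ ≤ ‖(d i₀ - μ)⁻¹‖ * (‖U‖ * ‖U⁻¹‖ * ‖E‖) := by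
    calc ‖B‖ ≤ ‖Dw * U⁻¹ * E‖ * ‖U‖ := norm_mul_le _ _
      _ ≤ (‖Dw * U⁻¹‖ * ‖E‖) * ‖U‖ := by gcongr; exact norm_mul_le _ _
      _ ≤ ((‖Dw‖ * ‖U⁻¹‖) * ‖E‖) * ‖U‖ := by gcongr; exact norm_mul_le _ _
      _ ≤ ((‖(d i₀ - μ)⁻¹‖ * ‖U⁻¹‖) * ‖E‖) * ‖U‖ := by gcongr
      _ = ‖(d i₀ - μ)⁻¹‖ * (‖U‖ * ‖U⁻¹‖ * ‖E‖) := by ring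
  refine ⟨i₀, ?_⟩
  have hpos : 0 < ‖d i₀ - μ‖ := norm_pos_iff.mpr (hne i₀)
  have h1 : (1 : ℝ) ≤ ‖d i₀ - μ‖⁻¹ * (‖U‖ * ‖U⁻¹‖ * ‖E‖) := by
    calc (1 : ℝ) ≤ ‖B‖ := hBnorm
      _ ≤ ‖(d i₀ - μ)⁻¹‖ * (‖U‖ * ‖U⁻¹‖ * ‖E‖) := hchain
      _ = ‖d i₀ - μ‖⁻¹ * (‖U‖ * ‖U⁻¹‖ * ‖E‖) := by rw [norm_inv]
  rw [← div_eq_inv_mul, le_div_iff₀ hpos, one_mul] at h1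
  have habs : ‖μ - d i₀‖ = ‖d i₀ - μ‖ := by
    rw [← norm_neg, neg_sub]
  rw [habs, specNorm_eq_norm, specNorm_eq_norm, specNorm_eq_norm]
  exact h1
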